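/- Let x = μ_j + z with z ~ N(0, σ²I_d), and suppose candidate centers ν_i, ν_j satisfy ‖ν_i − μ_i‖ ≤ σ/C_{ij} and ‖ν_j − μ_j‖ ≤ σ/C_{ij}, where ‖μ_i − μ_j‖ = C_{ij}σ with C_{ij} sufficiently large. Then P[‖x − ν_i‖ ≤ ‖x − ν_j‖] ≤ O(1)·exp(−C_{ij}²/8). -/

import Mathlib

open MeasureTheory ProbabilityTheory
open scoped RealInnerProductSpace

/-- `z` is a centered spherical Gaussian vector with per-coordinate variance `σ²`:
every one-dimensional projection `⟪v, z⟫` is Gaussian with variance `σ² ‖v‖²`. -/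
def IsSphericalGaussian {Ω : Type*} [MeasurableSpace Ω] (P : Measure Ω) {d : ℕ}
    (z : Ω → EuclideanSpace ℝ (Fin d)) (σ : ℝ) : Prop :=
  ∀ v : EuclideanSpace ℝ (Fin d),
    Measure.map (fun ω => ⟪v, z ω⟫) P = gaussianReal 0 (Real.toNNReal (σ^2 * ‖v‖^2))

open Real Set
open scoped NNReal ENNReal

lemma gaussian_tail {v : ℝ≥0} (hv : v ≠ 0) {t : ℝ} (ht : Real.sqrt v ≤ t) :
    ((gaussianReal 0 v) (Set.Ici t)).toReal ≤ Real.exp (-t^2 / (2*v)) := by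
  have hv0 : (0:ℝ) < v := lt_of_le_of_ne (v.coe_nonneg) (by exact_mod_cast (Ne.symm hv))
  have ht0 : 0 < t := lt_of_lt_of_le (Real.sqrt_pos.mpr hv0) ht
  set c : ℝ := t / v with hc
  have hc0 : 0 < c := div_pos ht0 hv0
  have h2v : (0:ℝ) < 2*(v:ℝ) := by positivity
  rw [gaussianReal_apply_eq_integral 0 hv,
    ENNReal.toReal_ofReal (setIntegral_nonneg measurableSet_Ici
      (fun x _ => gaussianPDFReal_nonneg 0 v x))]
  have hsqrt : 0 < Real.sqrt (2 * π * v) := Real.sqrt_pos.mpr (by positivity)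
  -- integrability of the dominating function
  have hint : IntegrableOn (fun x : ℝ => (Real.sqrt (2 * π * v))⁻¹ *
      Real.exp (-t^2/(2*v)) * (Real.exp (t*c) * Real.exp (-(x*c)))) (Set.Ici t) := by
    have h1 : IntegrableOn (fun x : ℝ => Real.exp (-c * x)) (Set.Ioi t) :=
      exp_neg_integrableOn_Ioi t hc0
    have h2 : IntegrableOn (fun x : ℝ => Real.exp (-c * x)) (Set.Ici t) := by
      rwa [integrableOn_Ici_iff_integrableOn_Ioi]
    have h3 := h2.const_mul ((Real.sqrt (2 * π * v))⁻¹ * Real.exp (-t^2/(2*v)) * Real.exp (t*c))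
    refine (IntegrableOn.congr_fun h3 (fun x _ => ?_) measurableSet_Ici)
    ring_nf
  have hle : ∫ x in Set.Ici t, gaussianPDFReal 0 v x ≤
      ∫ x in Set.Ici t, (Real.sqrt (2 * π * v))⁻¹ *
        Real.exp (-t^2/(2*v)) * (Real.exp (t*c) * Real.exp (-(x*c))) := by
    refine setIntegral_mono_on ((integrable_gaussianPDFReal 0 v).integrableOn) hint
      measurableSet_Ici (fun x hx => ?_)
    simp only [Set.mem_Ici] at hx
    rw [gaussianPDFReal, sub_zero]
    have hexp : Real.exp (-x ^ 2 / (2 * (v:ℝ))) ≤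
        Real.exp (-t^2/(2*(v:ℝ))) * (Real.exp (t*c) * Real.exp (-(x*c))) := ?_
    · calc (Real.sqrt (2 * π * (v:ℝ)))⁻¹ * Real.exp (-x ^ 2 / (2 * (v:ℝ)))
          ≤ (Real.sqrt (2 * π * (v:ℝ)))⁻¹ *
            (Real.exp (-t^2/(2*(v:ℝ))) * (Real.exp (t*c) * Real.exp (-(x*c)))) := by
            exact mul_le_mul_of_nonneg_left hexp (inv_nonneg.mpr (Real.sqrt_nonneg _))
        _ = _ := by ring
    rw [← Real.exp_add, ← Real.exp_add, Real.exp_le_exp]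
    rw [show (-t ^ 2 / (2 * (v:ℝ)) + (t * c + -(x * c))) = -(t^2)/(2*(v:ℝ)) + (t * c + -(x * c)) by ring]
    rw [show (-x ^ 2 / (2 * (v:ℝ))) = -(x^2)/(2*(v:ℝ)) by ring]
    have hrw : -(t^2)/(2*v) + (t*c + -(x*c)) = -(t^2)/(2*↑v) + (t - x)*t/(v:ℝ) := by
      rw [hc]; ring
    rw [hrw]
    have h2 : -(x^2)/(2*v) - (-(t^2)/(2*v)) ≤ (t - x)*t/(v:ℝ) := by
      have : -(x^2)/(2*v) - (-(t^2)/(2*v)) = (t^2 - x^2)/(2*(v:ℝ)) := by ring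
      rw [this, div_le_div_iff₀ h2v hv0]
      nlinarith [sq_nonneg (x - t)]
    linarith
  refine hle.trans ?_
  have hval : ∫ x in Set.Ici t, (Real.sqrt (2 * π * v))⁻¹ *
        Real.exp (-t^2/(2*v)) * (Real.exp (t*c) * Real.exp (-(x*c)))
      = (Real.sqrt (2 * π * v))⁻¹ * Real.exp (-t^2/(2*v)) * Real.exp (t*c) *
        (c⁻¹ * Real.exp (-(t*c))) := by
    rw [MeasureTheory.integral_Ici_eq_integral_Ioi]
    calc ∫ x in Set.Ioi t, (Real.sqrt (2 * π * v))⁻¹ *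
          Real.exp (-t^2/(2*v)) * (Real.exp (t*c) * Real.exp (-(x*c)))
        = ((Real.sqrt (2 * π * v))⁻¹ * Real.exp (-t^2/(2*v)) * Real.exp (t*c)) *
          ∫ x in Set.Ioi t, Real.exp (-(x*c)) := by
          rw [← integral_const_mul]; congr 1; ext x; ring
      _ = _ := by
          congr 1
          have := integral_comp_mul_right_Ioi (fun y => Real.exp (-y)) t hc0
          simp only [smul_eq_mul] at this
          rw [this, integral_exp_neg_Ioi]
  rw [hval]
  have hfin : (Real.sqrt (2 * π * v))⁻¹ * Real.exp (-t^2/(2*v)) * Real.exp (t*c) *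
        (c⁻¹ * Real.exp (-(t*c)))
      = Real.exp (-t^2/(2*v)) * ((Real.sqrt (2 * π * v))⁻¹ * c⁻¹) := by
    rw [mul_comm (c⁻¹) _, ← mul_assoc, mul_assoc _ _ (Real.exp (-(t*c)))]
    rw [← Real.exp_add, add_neg_cancel, Real.exp_zero]
    ring
  rw [hfin]
  have hone : (Real.sqrt (2 * π * v))⁻¹ * c⁻¹ ≤ 1 := by
    have hci : c⁻¹ = v / t := by rw [hc, inv_div]
    rw [hci]
    have hsv : Real.sqrt v ≤ Real.sqrt (2 * π * v) := by
      apply Real.sqrt_le_sqrt; nlinarith [Real.pi_gt_three, hv0]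
    have h1 : (Real.sqrt (2 * π * v))⁻¹ ≤ (Real.sqrt v)⁻¹ := by
      apply inv_anti₀ (Real.sqrt_pos.mpr hv0) hsv
    calc (Real.sqrt (2 * π * v))⁻¹ * ((v:ℝ) / t)
        ≤ (Real.sqrt v)⁻¹ * ((v:ℝ) / t) := by
          apply mul_le_mul_of_nonneg_right h1 (by positivity)
      _ = ((v:ℝ) / Real.sqrt v) / t := by ring
      _ = Real.sqrt v / t := by rw [Real.div_sqrt]
      _ ≤ 1 := by rw [div_le_one ht0]; exact ht
  calc Real.exp (-t^2/(2*v)) * ((Real.sqrt (2 * π * v))⁻¹ * c⁻¹)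
      ≤ Real.exp (-t^2/(2*v)) * 1 := by
        apply mul_le_mul_of_nonneg_left hone (Real.exp_nonneg _)
    _ = _ := by ring

set_option maxHeartbeats 1000000 in
theorem stmt_7 :
    ∃ K C₀ : ℝ, 0 < K ∧ 0 < C₀ ∧
      ∀ (d : ℕ) (Ω : Type) (_ : MeasurableSpace Ω) (P : Measure Ω)
        (_ : IsProbabilityMeasure P) (z : Ω → EuclideanSpace ℝ (Fin d))
        (σ Cij : ℝ) (μi μj νi νj : EuclideanSpace ℝ (Fin d)),
        0 < σ → C₀ ≤ Cij →
        IsSphericalGaussian P z σ →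
        ‖μi - μj‖ = Cij * σ →
        ‖νi - μi‖ ≤ σ / Cij → ‖νj - μj‖ ≤ σ / Cij →
        (P {ω | ‖(μj + z ω) - νi‖ ≤ ‖(μj + z ω) - νj‖}).toReal ≤
          K * Real.exp (-Cij^2 / 8) := by
  refine ⟨Real.exp 1, 4, Real.exp_pos 1, by norm_num, ?_⟩
  intro d Ω _ P hP z σ C μi μj νi νj hσ hC hz hμ hνi hνj
  have hC0 : (0:ℝ) < C := by linarith
  set w : EuclideanSpace ℝ (Fin d) := νi - νj with hw
  set a : ℝ := ‖w‖ with ha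
  set A : ℝ := ‖μj - νi‖ with hA
  set B : ℝ := ‖μj - νj‖ with hB
  set t : ℝ := (A^2 - B^2)/2 with htdef
  set e : ℝ := σ / C with he
  have hCe : C * e = σ := by rw [he]; field_simp [hC0.ne']
  have he0 : 0 ≤ e := by positivity
  have h2e : 2 * e ≤ σ := by nlinarith [hCe, he0, hC]
  -- norm bounds
  have hAlow : C*σ - e ≤ A := by
    have h1 : ‖μi - μj‖ ≤ ‖μi - νi‖ + ‖νi - μj‖ := norm_sub_le_norm_sub_add_norm_sub μi νi μj
    rw [norm_sub_rev μi νi, norm_sub_rev νi μj, hμ] at h1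
    rw [hA]; linarith [hνi, h1]
  have hBle : B ≤ e := by rw [hB, norm_sub_rev]; exact hνj
  have hB0 : 0 ≤ B := norm_nonneg _
  have haup : C * a ≤ C^2*σ + 2*σ := by
    have t1 : ‖νi - νj‖ ≤ ‖νi - μj‖ + ‖μj - νj‖ := norm_sub_le_norm_sub_add_norm_sub _ _ _
    have t2 : ‖νi - μj‖ ≤ ‖νi - μi‖ + ‖μi - μj‖ := norm_sub_le_norm_sub_add_norm_sub _ _ _
    rw [hμ] at t2
    rw [norm_sub_rev μj νj] at t1
    have h2 : a ≤ e + C*σ + e := by rw [ha, hw]; linarith [hνi, hνj, t1, t2]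
    nlinarith [hCe, hC0, h2e, hσ]
  have ha0 : 0 < a := by
    have h1 : ‖μj - νi‖ ≤ ‖μj - νj‖ + ‖νj - νi‖ := norm_sub_le_norm_sub_add_norm_sub _ _ _
    have h2 : ‖νj - νi‖ = a := by rw [ha, hw, norm_sub_rev]
    rw [← hA, ← hB, h2] at h1
    have h3 : C*σ - 2*e ≤ a := by linarith [hAlow, hBle]
    have h4 : 4*σ ≤ C*σ := by nlinarith [hσ, hC]
    linarith [h2e, h3, h4, hσ]
  have htpos : σ^2*(C^2 - 2)/2 ≤ t := by
    have hA0 : 0 ≤ C*σ - e := by nlinarith [hσ, hC, h2e]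
    have h1 : (C*σ - e)^2 ≤ A^2 := pow_le_pow_left₀ hA0 hAlow 2
    have h2 : B^2 ≤ e^2 := pow_le_pow_left₀ hB0 hBle 2
    have h3 : (C*σ - e)^2 - e^2 = C^2*σ^2 - 2*(C*e)*σ := by ring
    rw [hCe] at h3
    have h5 : C^2*σ^2 - 2*σ*σ ≤ A^2 - B^2 := by linarith [h1, h2, h3]
    rw [htdef]; nlinarith [h5]
  have ht0 : 0 < t := by
    have h1 : (0:ℝ) < C^2 - 2 := by nlinarith [hC]
    have h2 : (0:ℝ) < σ^2 := by positivity
    have hp := mul_pos h2 h1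
    linarith [htpos, hp]
  -- variance
  set s : ℝ := σ^2 * a^2 with hs
  have hs0 : 0 < s := by positivity
  have hvne : Real.toNNReal s ≠ 0 := by
    simp only [ne_eq, Real.toNNReal_eq_zero, not_le]
    exact hs0
  have hsqrt : Real.sqrt ((Real.toNNReal s : ℝ)) = σ * a := by
    rw [Real.coe_toNNReal _ hs0.le, hs, show σ^2*a^2 = (σ*a)^2 by ring,
      Real.sqrt_sq (by positivity)]
  have hst : Real.sqrt ((Real.toNNReal s : ℝ)) ≤ t := by
    rw [hsqrt]
    have h1 : 2*C*(σ*a) ≤ 2*(σ^2*(C^2+2)) := by nlinarith [haup, hσ]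
    have h2 : 2*(C^2+2) ≤ C*(C^2-2) := by nlinarith [hC]
    have h3 : σ^2*(2*(C^2+2)) ≤ σ^2*(C*(C^2-2)) :=
      mul_le_mul_of_nonneg_left h2 (sq_nonneg σ)
    have h4 : 2*C*(σ*a) ≤ 2*C*t := by nlinarith [h1, h3, htpos, hC0]
    exact le_of_mul_le_mul_left h4 (by positivity)
  -- event rewriting
  have hset : {ω | ‖(μj + z ω) - νi‖ ≤ ‖(μj + z ω) - νj‖}
      = (fun ω => ⟪w, z ω⟫) ⁻¹' (Set.Ici t) := by
    ext ω
    simp only [Set.mem_setOf_eq, Set.mem_preimage, Set.mem_Ici]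
    have e1 : (μj + z ω) - νi = (μj - νi) + z ω := by abel
    have e2 : (μj + z ω) - νj = (μj - νj) + z ω := by abel
    rw [e1, e2]
    have n1 : ‖(μj - νi) + z ω‖^2 = A^2 + 2*⟪μj - νi, z ω⟫ + ‖z ω‖^2 := by
      rw [hA]; exact norm_add_sq_real _ _
    have n2 : ‖(μj - νj) + z ω‖^2 = B^2 + 2*⟪μj - νj, z ω⟫ + ‖z ω‖^2 := by
      rw [hB]; exact norm_add_sq_real _ _
    have winner : ⟪w, z ω⟫ = ⟪μj - νj, z ω⟫ - ⟪μj - νi, z ω⟫ := by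
      rw [hw, show νi - νj = (μj - νj) - (μj - νi) by abel, inner_sub_left]
    constructor
    · intro h
      have hsq : ‖(μj - νi) + z ω‖^2 ≤ ‖(μj - νj) + z ω‖^2 :=
        pow_le_pow_left₀ (norm_nonneg _) h 2
      rw [htdef]; rw [n1, n2] at hsq; rw [winner]; linarith
    · intro h
      have hsq : ‖(μj - νi) + z ω‖^2 ≤ ‖(μj - νj) + z ω‖^2 := by
        rw [n1, n2]; rw [htdef] at h; rw [winner] at h; linarith
      have h5 := Real.sqrt_le_sqrt hsq
      rwa [Real.sqrt_sq (norm_nonneg _), Real.sqrt_sq (norm_nonneg _)] at h5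
  -- measurability
  have hmap := hz w
  have hae : AEMeasurable (fun ω => ⟪w, z ω⟫) P := by
    by_contra h
    rw [Measure.map_of_not_aemeasurable h] at hmap
    have h1 : (gaussianReal 0 (Real.toNNReal (σ^2 * ‖w‖^2))) Set.univ = 1 := measure_univ
    rw [← hmap] at h1
    simp at h1
  have hmeas : P {ω | ‖(μj + z ω) - νi‖ ≤ ‖(μj + z ω) - νj‖}
      = (gaussianReal 0 (Real.toNNReal s)) (Set.Ici t) := by
    rw [hset, ← Measure.map_apply_of_aemeasurable hae measurableSet_Ici, hmap]
  rw [hmeas]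
  refine (gaussian_tail hvne hst).trans ?_
  rw [← Real.exp_add]
  apply Real.exp_le_exp.mpr
  rw [Real.coe_toNNReal _ hs0.le]
  -- -t²/(2s) ≤ 1 - C²/8
  have k1a : (C*a)^2 ≤ (C^2*σ + 2*σ)^2 := pow_le_pow_left₀ (by positivity) haup 2
  have k1 : C^2 * s ≤ σ^4 * (C^2+2)^2 := by nlinarith [k1a, sq_nonneg σ]
  have k2 : σ^4*(C^2-2)^2 ≤ 4*t^2 := by
    have hp : (0:ℝ) ≤ σ^2*(C^2-2)/2 := by
      have : (0:ℝ) ≤ C^2-2 := by nlinarith [hC]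
      positivity
    have := pow_le_pow_left₀ hp htpos 2
    nlinarith [this]
  have k3 : (C^2-8)*(C^2+2)^2 ≤ C^2*(C^2-2)^2 := by nlinarith [sq_nonneg C, hC]
  have hC8 : (0:ℝ) ≤ C^2 - 8 := by nlinarith [hC]
  have m1 := mul_le_mul_of_nonneg_left k1 hC8
  have m2 := mul_le_mul_of_nonneg_left k3 (by positivity : (0:ℝ) ≤ σ^4)
  have m3 := mul_le_mul_of_nonneg_left k2 (sq_nonneg C)
  have key2 : ((C^2-8)*(2*s))*C^2 ≤ (8*t^2)*C^2 := by
    have e1 : ((C^2-8)*(2*s))*C^2 = 2*((C^2-8)*(C^2*s)) := by ring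
    have e2 : (C^2-8)*(σ^4*(C^2+2)^2) = σ^4*((C^2-8)*(C^2+2)^2) := by ring
    have e3 : σ^4*(C^2*(C^2-2)^2) = C^2*(σ^4*(C^2-2)^2) := by ring
    have e4 : (8*t^2)*C^2 = 2*(C^2*(4*t^2)) := by ring
    rw [e1, e4]
    have := (m1.trans_eq e2).trans ((m2.trans_eq e3).trans m3)
    linarith [this]
  have key : (C^2-8)*(2*s) ≤ 8*t^2 := le_of_mul_le_mul_right key2 (by positivity)
  have hdiv : (C^2-8)/8 ≤ t^2/(2*s) := by
    rw [div_le_div_iff₀ (by norm_num) (by positivity)]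
    linarith [key]
  rw [neg_div, neg_div]
  linarith [hdiv]
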